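/- Let P be a finite poset, v ∈ P, and let (x₁, …, x_k) be a linear extension of the subposet {x ∈ P : x < v}. Define η_v = T_{x₁} ∘ T_{x₂} ∘ ⋯ ∘ T_{x_k} and τ_v* = η_v ∘ T_v ∘ η_v⁻¹. Then Θ ∘ Δ⁻¹ ∘ τ_v = τ_v* ∘ Θ ∘ Δ⁻¹ as maps on positive labelings of P. -/

import Mathlib

/-!
Birational (commutative) antichain/order rowmotion on a finite poset `P`, with labels in `ℝ`
and positive labelings, following Joseph–Roby, "Birational and noncommutative lifts of
antichain toggling and rowmotion".
-/

open Finset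

attribute [local instance] Classical.propDecidable

variable {P : Type*} [Fintype P] [PartialOrder P]

/-- `c` is a saturated chain in `P`: consecutive entries are covers. -/
def SatChain {P : Type*} [PartialOrder P] {k : ℕ} (c : Fin (k + 1) → P) : Prop :=
  ∀ i : Fin k, c i.castSucc ⋖ c i.succ

/-- `c` is a maximal chain of `P`: a saturated chain from a minimal element to a maximal
element of `P` (equivalently, the restriction to `P` of a maximal chain
`0̂ ⋖ y₁ ⋖ ⋯ ⋖ y_k ⋖ 1̂` of `P̂`). -/
def MaxChain {P : Type*} [PartialOrder P] {k : ℕ} (c : Fin (k + 1) → P) : Prop :=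
  SatChain c ∧ IsMin (c 0) ∧ IsMax (c (Fin.last k))

/-- `Υ_v(g)`: the sum over all maximal chains `(y₁, …, y_k)` of `P` through `v` of the
products `g(y₁)⋯g(y_k)` of the labels along the chain. -/
noncomputable def Upsilon (g : P → ℝ) (v : P) : ℝ :=
  ∑ k ∈ range (Fintype.card P),
    ∑ c ∈ univ.filter (fun c : Fin (k + 1) → P => MaxChain c ∧ ∃ j, c j = v),
      (List.ofFn (g ∘ c)).prod

/-- The birational antichain toggle `τ_v`: it replaces the label at `v` by `C / Υ_v(g)` and
fixes all other labels. -/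
noncomputable def atog (C : ℝ) (v : P) (g : P → ℝ) : P → ℝ :=
  fun x => if x = v then C / Upsilon g v else g x

/-- `∑_{y ∈ P̂, y ⋖ x} f(y)`, with the convention `f(0̂) = 1` (the unique lower cover in
`P̂` of a minimal element of `P` is `0̂`). -/
noncomputable def lowSum (f : P → ℝ) (x : P) : ℝ :=
  (if IsMin x then 1 else 0) + ∑ y ∈ univ.filter (fun y => y ⋖ x), f y

/-- `∑_{y ∈ P̂, y ⋗ x} 1/f(y)`, with the convention `f(1̂) = C`. -/
noncomputable def upInvSum (C : ℝ) (f : P → ℝ) (x : P) : ℝ :=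
  (if IsMax x then 1 / C else 0) + ∑ y ∈ univ.filter (fun y => x ⋖ y), 1 / f y

/-- The birational order toggle `T_v`: it replaces the label at `v` by
`(∑_{y ∈ P̂, y ⋖ v} f(y)) / (f(v) · ∑_{y ∈ P̂, y ⋗ v} 1/f(y))` (with `f(0̂) = 1`,
`f(1̂) = C`) and fixes all other labels. -/
noncomputable def otog (C : ℝ) (v : P) (f : P → ℝ) : P → ℝ :=
  fun x => if x = v then lowSum f v / (f v * upInvSum C f v) else f x

/-- The birational complement map `Θ`: `(Θf)(x) = C / f(x)`. -/
noncomputable def thetaMap (C : ℝ) (f : P → ℝ) : P → ℝ := fun x => C / f x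

/-- The birational down transfer `∇`: `(∇f)(x) = f(x) / ∑_{y ∈ P̂, y ⋖ x} f(y)` with
`f(0̂) = 1`. -/
noncomputable def nablaMap (f : P → ℝ) : P → ℝ := fun x => f x / lowSum f x

/-- The birational inverse up transfer `Δ⁻¹`: `(Δ⁻¹f)(x)` is the sum, over all saturated
chains `x = y₁ ⋖ y₂ ⋖ ⋯ ⋖ y_k ⋖ 1̂` in `P̂` (i.e. saturated chains of `P` starting at `x`
and ending at a maximal element of `P`), of `f(y₁)f(y₂)⋯f(y_k)`. -/
noncomputable def deltaInvMap (f : P → ℝ) : P → ℝ := fun x =>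
  ∑ k ∈ range (Fintype.card P),
    ∑ c ∈ univ.filter (fun c : Fin (k + 1) → P =>
        SatChain c ∧ c 0 = x ∧ IsMax (c (Fin.last k))),
      (List.ofFn (f ∘ c)).prod

/-- `l` is a linear extension of `P`: it lists every element of `P` exactly once, and
`l[i] < l[j]` in `P` implies `i < j`. -/
def IsLinearExtension {P : Type*} [PartialOrder P] (l : List P) : Prop :=
  l.Nodup ∧ (∀ x : P, x ∈ l) ∧
    ∀ (i j : ℕ) (hi : i < l.length) (hj : j < l.length), l[i]'hi < l[j]'hj → i < j

/-- `l` is a linear extension of the subposet `A` of `P`. -/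
def IsLinearExtensionOn {P : Type*} [PartialOrder P] (A : Set P) (l : List P) : Prop :=
  l.Nodup ∧ (∀ x : P, x ∈ l ↔ x ∈ A) ∧
    ∀ (i j : ℕ) (hi : i < l.length) (hj : j < l.length), l[i]'hi < l[j]'hj → i < j

/-- Apply the antichain toggles `τ` along the list `l`, first element of `l` first; for a
linear extension `l = (x₁,…,xₙ)` this is `τ_{xₙ} ∘ ⋯ ∘ τ_{x₂} ∘ τ_{x₁}`, i.e. birational
antichain rowmotion `BAR`. -/
noncomputable def applyATogs (C : ℝ) (l : List P) (g : P → ℝ) : P → ℝ :=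
  l.foldl (fun h v => atog C v h) g

/-- Apply the order toggles `T` along the list `l`, first element of `l` first. -/
noncomputable def applyOTogs (C : ℝ) (l : List P) (f : P → ℝ) : P → ℝ :=
  l.foldl (fun h v => otog C v h) f

/-- `rk` is a rank function exhibiting `P` as a graded poset of rank `r`: minimal elements
have rank `0`, ranks increase by `1` along covers, and maximal elements have rank `r`. -/
def IsRankFunction {P : Type*} [PartialOrder P] (rk : P → ℕ) (r : ℕ) : Prop :=
  (∀ x : P, IsMin x → rk x = 0) ∧ (∀ x y : P, x ⋖ y → rk y = rk x + 1) ∧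
    (∀ x : P, IsMax x → rk x = r)

section Part1

variable {P : Type*} [Fintype P] [PartialOrder P]

theorem SatChain.strictMono {k : ℕ} {c : Fin (k + 1) → P} (hc : SatChain c) :
    StrictMono c :=
  Fin.strictMono_iff_lt_succ.2 fun i => (hc i).lt

/-- `upT f k x`: sum over saturated chains with `k+1` elements from `x` to a maximal
element. -/
noncomputable def upT (f : P → ℝ) (k : ℕ) (x : P) : ℝ :=
  ∑ c ∈ univ.filter (fun c : Fin (k + 1) → P =>
      SatChain c ∧ c 0 = x ∧ IsMax (c (Fin.last k))),
    (List.ofFn (f ∘ c)).prod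

theorem deltaInvMap_eq_sum_upT (f : P → ℝ) (x : P) :
    deltaInvMap f x = ∑ k ∈ range (Fintype.card P), upT f k x := rfl

theorem upT_zero (f : P → ℝ) (x : P) :
    upT f 0 x = if IsMax x then f x else 0 := by
  unfold upT
  by_cases hx : IsMax x
  · rw [if_pos hx]
    have : (univ.filter (fun c : Fin 1 → P =>
        SatChain c ∧ c 0 = x ∧ IsMax (c (Fin.last 0)))) = {fun _ => x} := by
      ext c
      simp only [mem_filter, mem_univ, true_and, mem_singleton]
      constructor
      · rintro ⟨-, h0, -⟩
        funext i
        have : i = 0 := Subsingleton.elim _ _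
        rw [this, h0]
      · rintro rfl
        refine ⟨fun i => i.elim0, rfl, ?_⟩
        simpa using hx
    rw [this, sum_singleton]
    simp
  · rw [if_neg hx]
    apply sum_eq_zero
    intro c hcmem
    simp only [mem_filter] at hcmem
    obtain ⟨-, -, h0, hmax⟩ := hcmem
    exfalso
    apply hx
    have : Fin.last 0 = 0 := rfl
    rwa [this, h0] at hmax

theorem upT_succ (f : P → ℝ) (k : ℕ) (x : P) :
    upT f (k + 1) x = f x * ∑ y ∈ univ.filter (fun y => x ⋖ y), upT f k y := by
  unfold upT
  rw [mul_sum]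
  -- push the filter inside: group chains by their second element
  have key : ∀ y ∈ univ.filter (fun y => x ⋖ y),
      f x * (∑ c ∈ univ.filter (fun c : Fin (k + 1) → P =>
        SatChain c ∧ c 0 = y ∧ IsMax (c (Fin.last k))), (List.ofFn (f ∘ c)).prod)
      = ∑ c ∈ univ.filter (fun c : Fin (k + 2) → P =>
          (SatChain c ∧ c 0 = x ∧ IsMax (c (Fin.last (k+1)))) ∧ c 1 = y),
          (List.ofFn (f ∘ c)).prod := by
    intro y hy
    rw [mem_filter] at hy
    have hxy : x ⋖ y := hy.2
    rw [mul_sum]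
    refine sum_nbij' (fun d => Fin.cases x d) (fun c => c ∘ Fin.succ) ?_ ?_ ?_ ?_ ?_
    · intro d hd
      rw [mem_filter] at hd ⊢
      obtain ⟨-, hsat, h0, hmax⟩ := hd
      refine ⟨mem_univ _, ⟨?_, by simp, ?_⟩,
        by rw [← Fin.succ_zero_eq_one]; simp only [Fin.cases_succ, h0]⟩
      · intro i
        refine Fin.cases ?_ ?_ i
        · simp only [Fin.castSucc_zero, Fin.cases_zero, Fin.cases_succ, h0]
          exact hxy
        · intro j
          have h1 : (Fin.castSucc (Fin.succ j)) = Fin.succ (Fin.castSucc j) := by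
            exact (Fin.succ_castSucc j).symm
          rw [h1]
          simpa using hsat j
      · have h2 : Fin.last (k+1) = Fin.succ (Fin.last k) := by
          simp [Fin.succ_last]
        rw [h2]
        exact hmax
    · intro c hc
      rw [mem_filter] at hc ⊢
      obtain ⟨-, ⟨hsat, h0, hmax⟩, h1⟩ := hc
      refine ⟨mem_univ _, ?_, ?_, ?_⟩
      · intro i
        have h3 : Fin.succ (Fin.castSucc i) = Fin.castSucc (Fin.succ i) := Fin.succ_castSucc i
        show c (Fin.succ (Fin.castSucc i)) ⋖ c (Fin.succ (Fin.succ i))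
        rw [h3]
        exact hsat i.succ
      · exact h1
      · show IsMax (c (Fin.succ (Fin.last k)))
        rw [Fin.succ_last]
        exact hmax
    · intro d hd
      funext i
      simp
    · intro c hc
      rw [mem_filter] at hc
      obtain ⟨-, ⟨hsat, h0, hmax⟩, h1⟩ := hc
      funext i
      refine Fin.cases ?_ ?_ i
      · simpa using h0.symm
      · intro j
        simp
    · intro d hd
      rw [mem_filter] at hd
      obtain ⟨-, hsat, h0, hmax⟩ := hd
      simp [List.ofFn_succ, mul_assoc]
  rw [sum_congr rfl key]
  have hsplit := sum_fiberwise_eq_sum_filter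
      (univ.filter (fun c : Fin (k + 2) → P =>
        SatChain c ∧ c 0 = x ∧ IsMax (c (Fin.last (k + 1)))))
      (univ.filter (fun y => x ⋖ y)) (fun c => c 1)
      (fun c => (List.ofFn (f ∘ c)).prod)
  simp only [filter_filter] at hsplit
  rw [hsplit]
  refine (sum_congr ?_ (fun _ _ => rfl)).symm
  ext c
  simp only [mem_filter, mem_univ, true_and]
  constructor
  · rintro ⟨h1, _⟩; exact h1
  · intro h
    refine ⟨h, ?_⟩
    have h0 := h.1 0
    simpa [h.2.1] using h0

end Part1

section Part2

variable {P : Type*} [Fintype P] [PartialOrder P]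

/-- A saturated chain avoiding some element has at most `card P - 1` entries. -/
theorem satChain_card_bound {k : ℕ} {z : P} {c : Fin (k + 1) → P} (hc : SatChain c)
    (hz : ∀ j, c j ≠ z) : k + 2 ≤ Fintype.card P := by
  have hcinj := hc.strictMono.injective
  have h1 : (univ.image c).card = k + 1 := by
    rw [Finset.card_image_of_injective _ hcinj, card_univ, Fintype.card_fin]
  have hz' : z ∉ univ.image c := by
    simp only [Finset.mem_image, mem_univ, true_and]
    rintro ⟨j, hj⟩
    exact hz j hj
  have h2 : (insert z (univ.image c)).card = k + 2 := by
    rw [Finset.card_insert_of_notMem hz', h1]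
  calc k + 2 = (insert z (univ.image c)).card := h2.symm
    _ ≤ univ.card := Finset.card_le_card (Finset.subset_univ _)
    _ = Fintype.card P := card_univ

theorem upT_eq_zero_of_lt (f : P → ℝ) {k : ℕ} {x z : P} (hz : z < x)
    (hk : Fintype.card P ≤ k + 1) : upT f k x = 0 := by
  unfold upT
  apply sum_eq_zero
  intro c hc
  rw [mem_filter] at hc
  obtain ⟨-, hsat, h0, -⟩ := hc
  exfalso
  have hb := satChain_card_bound hsat (z := z) (fun j => ?_)
  · omega
  · have : x ≤ c j := by
      rw [← h0]
      exact hsat.strictMono.monotone (Fin.zero_le j)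
    exact (lt_of_lt_of_le hz this).ne'

theorem deltaInvMap_rec (f : P → ℝ) (x : P) :
    deltaInvMap f x = f x * ((if IsMax x then 1 else 0)
      + ∑ y ∈ univ.filter (fun y => x ⋖ y), deltaInvMap f y) := by
  have hcard : 1 ≤ Fintype.card P := @Fintype.card_pos P _ ⟨x⟩
  obtain ⟨m, hm⟩ : ∃ m, Fintype.card P = m + 1 :=
    ⟨Fintype.card P - 1, by omega⟩
  have hy0 : ∀ y ∈ univ.filter (fun y => x ⋖ y),
      deltaInvMap f y = ∑ k ∈ range m, upT f k y := by
    intro y hy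
    rw [mem_filter] at hy
    rw [deltaInvMap_eq_sum_upT, hm, Finset.sum_range_succ,
      upT_eq_zero_of_lt f hy.2.lt (by omega), add_zero]
  rw [deltaInvMap_eq_sum_upT, hm, Finset.sum_range_succ', upT_zero,
    sum_congr rfl (fun k _ => upT_succ f k x), ← mul_sum, Finset.sum_comm,
    sum_congr rfl (fun y hy => (hy0 y hy).symm)]
  by_cases hmax : IsMax x <;> simp [hmax, mul_add, add_comm]

theorem deltaInvMap_pos (f : P → ℝ) (hf : ∀ x, 0 < f x) (x : P) :
    0 < deltaInvMap f x := by
  induction x using ((Finite.to_wellFoundedGT (α := P)).wf).induction with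
  | _ a IH =>
    rw [deltaInvMap_rec]
    apply mul_pos (hf a)
    by_cases hmax : IsMax a
    · rw [if_pos hmax]
      have hnn : 0 ≤ ∑ y ∈ univ.filter (fun y => a ⋖ y), deltaInvMap f y :=
        sum_nonneg fun y hy => by
          rw [mem_filter] at hy
          exact (IH y hy.2.lt).le
      linarith
    · rw [if_neg hmax, zero_add]
      apply sum_pos
      · intro y hy
        rw [mem_filter] at hy
        exact IH y hy.2.lt
      · obtain ⟨y, hy⟩ := exists_covBy_of_wellFoundedLT hmax
        exact ⟨y, by simp [hy]⟩

end Part2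

section Part3

variable {P : Type*} [Fintype P] [PartialOrder P]

/-- `dnT f k x`: sum over saturated chains with `k+1` elements from a minimal element
up to `x`. -/
noncomputable def dnT (f : P → ℝ) (k : ℕ) (x : P) : ℝ :=
  ∑ c ∈ univ.filter (fun c : Fin (k + 1) → P =>
      SatChain c ∧ IsMin (c 0) ∧ c (Fin.last k) = x),
    (List.ofFn (f ∘ c)).prod

/-- The down-transfer sum: `downDelta f x` is the sum over saturated chains
`0̂ ⋖ y₁ ⋖ ⋯ ⋖ y_k = x` of the products of labels. -/
noncomputable def downDelta (f : P → ℝ) : P → ℝ := fun x =>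
  ∑ k ∈ range (Fintype.card P), dnT f k x

theorem dnT_zero (f : P → ℝ) (x : P) :
    dnT f 0 x = if IsMin x then f x else 0 := by
  unfold dnT
  by_cases hx : IsMin x
  · rw [if_pos hx]
    have : (univ.filter (fun c : Fin 1 → P =>
        SatChain c ∧ IsMin (c 0) ∧ c (Fin.last 0) = x)) = {fun _ => x} := by
      ext c
      simp only [mem_filter, mem_univ, true_and, mem_singleton]
      constructor
      · rintro ⟨-, -, hlast⟩
        funext i
        have h1 : i = Fin.last 0 := Subsingleton.elim _ _
        rw [h1, hlast]
      · rintro rfl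
        exact ⟨fun i => i.elim0, hx, rfl⟩
    rw [this, sum_singleton]
    simp
  · rw [if_neg hx]
    apply sum_eq_zero
    intro c hcmem
    simp only [mem_filter] at hcmem
    obtain ⟨-, -, hmin, hlast⟩ := hcmem
    exfalso
    apply hx
    have h1 : (0 : Fin 1) = Fin.last 0 := rfl
    rwa [h1, hlast] at hmin

theorem dnT_succ (f : P → ℝ) (k : ℕ) (x : P) :
    dnT f (k + 1) x = (∑ y ∈ univ.filter (fun y => y ⋖ x), dnT f k y) * f x := by
  unfold dnT
  rw [sum_mul]
  have key : ∀ y ∈ univ.filter (fun y => y ⋖ x),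
      (∑ c ∈ univ.filter (fun c : Fin (k + 1) → P =>
        SatChain c ∧ IsMin (c 0) ∧ c (Fin.last k) = y), (List.ofFn (f ∘ c)).prod) * f x
      = ∑ c ∈ univ.filter (fun c : Fin (k + 2) → P =>
          (SatChain c ∧ IsMin (c 0) ∧ c (Fin.last (k + 1)) = x)
            ∧ c (Fin.castSucc (Fin.last k)) = y),
          (List.ofFn (f ∘ c)).prod := by
    intro y hy
    rw [mem_filter] at hy
    have hxy : y ⋖ x := hy.2
    rw [sum_mul]
    refine sum_nbij' (fun d => Fin.snoc d x) (fun c => c ∘ Fin.castSucc) ?_ ?_ ?_ ?_ ?_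
    · intro d hd
      rw [mem_filter] at hd ⊢
      obtain ⟨-, hsat, hmin, hlast⟩ := hd
      refine ⟨mem_univ _, ⟨?_, ?_, by simp⟩, by simp [hlast]⟩
      · intro i
        beta_reduce
        refine Fin.lastCases ?_ ?_ i
        · simp only [Fin.succ_last, Fin.snoc_last, Fin.snoc_castSucc, hlast]
          exact hxy
        · intro j
          simp only [Fin.succ_castSucc, Fin.snoc_castSucc]
          exact hsat j
      · have h0 : ((0 : Fin (k + 2))) = Fin.castSucc 0 := (Fin.castSucc_zero).symm
        beta_reduce
        rw [h0, Fin.snoc_castSucc]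
        exact hmin
    · intro c hc
      rw [mem_filter] at hc ⊢
      obtain ⟨-, ⟨hsat, hmin, hlast⟩, hy2⟩ := hc
      refine ⟨mem_univ _, ?_, ?_, hy2⟩
      · intro i
        show c (Fin.castSucc (Fin.castSucc i)) ⋖ c (Fin.castSucc (Fin.succ i))
        rw [← Fin.succ_castSucc]
        exact hsat i.castSucc
      · show IsMin (c (Fin.castSucc 0))
        rwa [Fin.castSucc_zero]
    · intro d hd
      funext i
      simp
    · intro c hc
      rw [mem_filter] at hc
      obtain ⟨-, ⟨hsat, hmin, hlast⟩, hy2⟩ := hc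
      funext i
      beta_reduce
      refine Fin.lastCases ?_ ?_ i
      · rw [Fin.snoc_last, hlast]
      · intro j
        simp
    · intro d hd
      rw [mem_filter] at hd
      obtain ⟨-, hsat, hmin, hlast⟩ := hd
      have h5 : (List.ofFn (f ∘ (Fin.snoc d x : Fin (k + 2) → P))).prod
          = (List.ofFn (f ∘ d)).prod * f x := by
        rw [List.ofFn_succ']
        simp only [List.concat_eq_append, List.prod_append, Function.comp_apply,
          Fin.snoc_castSucc, Fin.snoc_last, List.prod_cons, List.prod_nil, mul_one]
        rfl
      simpa using h5.symm
  rw [sum_congr rfl key]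
  have hsplit := sum_fiberwise_eq_sum_filter
      (univ.filter (fun c : Fin (k + 2) → P =>
        SatChain c ∧ IsMin (c 0) ∧ c (Fin.last (k + 1)) = x))
      (univ.filter (fun y => y ⋖ x)) (fun c => c (Fin.castSucc (Fin.last k)))
      (fun c => (List.ofFn (f ∘ c)).prod)
  simp only [filter_filter] at hsplit
  rw [hsplit]
  refine (sum_congr ?_ (fun _ _ => rfl)).symm
  ext c
  simp only [mem_filter, mem_univ, true_and]
  constructor
  · rintro ⟨h1, _⟩; exact h1
  · intro h
    refine ⟨h, ?_⟩
    have h0 := h.1 (Fin.last k)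
    rw [Fin.succ_last, h.2.2] at h0
    exact h0

theorem dnT_eq_zero_of_lt (f : P → ℝ) {k : ℕ} {x z : P} (hz : x < z)
    (hk : Fintype.card P ≤ k + 1) : dnT f k x = 0 := by
  unfold dnT
  apply sum_eq_zero
  intro c hc
  rw [mem_filter] at hc
  obtain ⟨-, hsat, -, hlast⟩ := hc
  exfalso
  have hb := satChain_card_bound hsat (z := z) (fun j => ?_)
  · omega
  · have : c j ≤ x := by
      rw [← hlast]
      exact hsat.strictMono.monotone (Fin.le_last j)
    exact (lt_of_le_of_lt this hz).ne

theorem downDelta_rec (f : P → ℝ) (x : P) :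
    downDelta f x = f x * ((if IsMin x then 1 else 0)
      + ∑ y ∈ univ.filter (fun y => y ⋖ x), downDelta f y) := by
  have hcard : 1 ≤ Fintype.card P := @Fintype.card_pos P _ ⟨x⟩
  obtain ⟨m, hm⟩ : ∃ m, Fintype.card P = m + 1 :=
    ⟨Fintype.card P - 1, by omega⟩
  have hy0 : ∀ y ∈ univ.filter (fun y => y ⋖ x),
      downDelta f y = ∑ k ∈ range m, dnT f k y := by
    intro y hy
    rw [mem_filter] at hy
    rw [downDelta, hm, Finset.sum_range_succ,
      dnT_eq_zero_of_lt f hy.2.lt (by omega), add_zero]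
  rw [downDelta, hm, Finset.sum_range_succ', dnT_zero,
    sum_congr rfl (fun k _ => dnT_succ f k x), ← sum_mul, Finset.sum_comm,
    sum_congr rfl (fun y hy => (hy0 y hy).symm)]
  by_cases hmin : IsMin x <;> simp [hmin, mul_add, add_comm, mul_comm]

theorem downDelta_pos (f : P → ℝ) (hf : ∀ x, 0 < f x) (x : P) :
    0 < downDelta f x := by
  induction x using ((Finite.to_wellFoundedLT (α := P)).wf).induction with
  | _ a IH =>
    rw [downDelta_rec]
    apply mul_pos (hf a)
    by_cases hmin : IsMin a
    · rw [if_pos hmin]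
      have hnn : 0 ≤ ∑ y ∈ univ.filter (fun y => y ⋖ a), downDelta f y :=
        sum_nonneg fun y hy => by
          rw [mem_filter] at hy
          exact (IH y hy.2.lt).le
      linarith
    · rw [if_neg hmin, zero_add]
      apply sum_pos
      · intro y hy
        rw [mem_filter] at hy
        exact IH y hy.2.lt
      · obtain ⟨y, hy⟩ := exists_covBy_of_wellFoundedGT hmin
        exact ⟨y, by simp [hy]⟩

end Part3

section Part4

variable {P : Type*} [Fintype P] [PartialOrder P]

theorem satChain_iff_val {k : ℕ} {c : Fin (k + 1) → P} :
    SatChain c ↔ ∀ (i : ℕ) (h : i < k),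
      c ⟨i, by omega⟩ ⋖ c ⟨i + 1, by omega⟩ := by
  constructor
  · intro hc i h
    have h2 := hc ⟨i, h⟩
    have e1 : (Fin.castSucc (⟨i, h⟩ : Fin k)) = (⟨i, by omega⟩ : Fin (k + 1)) := by
      ext; simp
    have e2 : (Fin.succ (⟨i, h⟩ : Fin k)) = (⟨i + 1, by omega⟩ : Fin (k + 1)) := by
      ext; simp
    rwa [e1, e2] at h2
  · intro h i
    have h2 := h i.1 i.2
    have e1 : (⟨i.1, by omega⟩ : Fin (k + 1)) = i.castSucc := by ext; simp
    have e2 : (⟨i.1 + 1, by omega⟩ : Fin (k + 1)) = i.succ := by ext; simp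
    rwa [e1, e2] at h2

theorem dnT_mul_upT_eq_zero (g : P → ℝ) {a b : ℕ} {v : P}
    (h : Fintype.card P ≤ a + b) : dnT g a v * upT g b v = 0 := by
  by_contra hne
  obtain ⟨hd, hu⟩ := mul_ne_zero_iff.1 hne
  have hD : ∃ d : Fin (a + 1) → P, SatChain d ∧ IsMin (d 0) ∧ d (Fin.last a) = v := by
    by_contra hcon
    push_neg at hcon
    apply hd
    unfold dnT
    apply sum_eq_zero
    intro d hdm
    rw [mem_filter] at hdm
    exact absurd hdm.2.1 (by intro h1; exact absurd hdm.2.2.2 (by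
      intro h2
      exact absurd hdm.2.2.1 (by intro h3; exact (hcon d h1 h3 h2).elim)))
  have hU : ∃ u : Fin (b + 1) → P, SatChain u ∧ u 0 = v ∧ IsMax (u (Fin.last b)) := by
    by_contra hcon
    push_neg at hcon
    apply hu
    unfold upT
    apply sum_eq_zero
    intro u hum
    rw [mem_filter] at hum
    exact (hcon u hum.2.1 hum.2.2.1 hum.2.2.2).elim
  obtain ⟨d, hdsat, -, hdlast⟩ := hD
  obtain ⟨u, husat, hu0, -⟩ := hU
  have hdinj := hdsat.strictMono.injective
  have huinj := husat.strictMono.injective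
  have hcard_d : (univ.image d).card = a + 1 := by
    rw [Finset.card_image_of_injective _ hdinj, card_univ, Fintype.card_fin]
  have hcard_u : (univ.image u).card = b + 1 := by
    rw [Finset.card_image_of_injective _ huinj, card_univ, Fintype.card_fin]
  have hinter : (univ.image d ∩ univ.image u) ⊆ {v} := by
    intro z hz
    rw [Finset.mem_inter] at hz
    obtain ⟨hz1, hz2⟩ := hz
    rw [Finset.mem_image] at hz1 hz2
    obtain ⟨i, -, hi⟩ := hz1
    obtain ⟨j, -, hj⟩ := hz2
    have hle : z ≤ v := by
      rw [← hi, ← hdlast]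
      exact hdsat.strictMono.monotone (Fin.le_last i)
    have hge : v ≤ z := by
      rw [← hj, ← hu0]
      exact husat.strictMono.monotone (Fin.zero_le j)
    simp [le_antisymm hle hge]
  have hij : (univ.image d ∩ univ.image u).card ≤ 1 := by
    calc (univ.image d ∩ univ.image u).card ≤ ({v} : Finset P).card :=
          Finset.card_le_card hinter
      _ = 1 := Finset.card_singleton v
  have hun := Finset.card_union_add_card_inter (univ.image d) (univ.image u)
  have hle2 : (univ.image d ∪ univ.image u).card ≤ Fintype.card P := by
    rw [← card_univ]
    exact Finset.card_le_card (Finset.subset_univ _)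
  omega

theorem sum_antidiag_eq (A B : ℕ → ℝ) (n : ℕ)
    (h0 : ∀ a b : ℕ, n ≤ a + b → A a * B b = 0) :
    ∑ k ∈ range n, ∑ j ∈ range (k + 1), A j * B (k - j)
      = (∑ a ∈ range n, A a) * (∑ b ∈ range n, B b) := by
  rw [sum_mul_sum]
  have hR : ∀ a ∈ range n, ∑ b ∈ range n, A a * B b
      = ∑ b ∈ range (n - a), A a * B b := by
    intro a ha
    rw [mem_range] at ha
    refine (sum_subset ?_ ?_).symm
    · intro b hb
      rw [mem_range] at hb ⊢
      omega
    · intro b hb hb2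
      rw [mem_range] at hb hb2
      exact h0 a b (by omega)
  rw [sum_congr rfl hR, Finset.sum_sigma', Finset.sum_sigma']
  refine sum_nbij' (fun p => ⟨p.2, p.1 - p.2⟩) (fun q => ⟨q.1 + q.2, q.1⟩) ?_ ?_ ?_ ?_ ?_
  · intro p hp
    simp only [Finset.mem_sigma, mem_range] at hp ⊢
    omega
  · intro q hq
    simp only [Finset.mem_sigma, mem_range] at hq ⊢
    omega
  · intro p hp
    simp only [Finset.mem_sigma, mem_range] at hp
    refine Sigma.ext ?_ ?_ <;> simp <;> omega
  · intro q hq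
    simp only [Finset.mem_sigma, mem_range] at hq
    refine Sigma.ext ?_ ?_ <;> simp <;> omega
  · intro p hp
    rfl

end Part4

section Part5

variable {P : Type*} [Fintype P] [PartialOrder P]

theorem range_prod_split (h : ℕ → ℝ) (a b : ℕ) :
    (∏ i ∈ range (a + b + 1), h i) * h a
      = (∏ i ∈ range (a + 1), h i) * ∏ i ∈ range (b + 1), h (a + i) := by
  have e2 : ∏ i ∈ range (b + 1), h (a + i)
      = (∏ i ∈ range b, h (a + (i + 1))) * h (a + 0) :=
    Finset.prod_range_succ' (fun i => h (a + i)) b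
  have e1 : ∀ i ∈ range b, h (a + 1 + i) = h (a + (i + 1)) := by
    intro i _
    rw [show a + 1 + i = a + (i + 1) from by omega]
  rw [e2, add_zero, show a + b + 1 = (a + 1) + b from by omega, Finset.prod_range_add,
    prod_congr rfl e1]
  ring

theorem maxchain_split' (g : P → ℝ) (v : P) (a b : ℕ) :
    (∑ c ∈ univ.filter (fun c : Fin (a + b + 1) → P =>
        MaxChain c ∧ c ⟨a, by omega⟩ = v), (List.ofFn (g ∘ c)).prod) * g v
    = dnT g a v * upT g b v := by
  unfold dnT upT
  rw [sum_mul, sum_mul_sum, ← Finset.sum_product']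
  refine sum_nbij'
    (fun c => ((fun i : Fin (a + 1) => c ⟨i, by have := i.isLt; omega⟩),
               (fun i : Fin (b + 1) => c ⟨a + i, by have := i.isLt; omega⟩)))
    (fun p => (fun i : Fin (a + b + 1) => if h : (i : ℕ) < a + 1 then p.1 ⟨i, h⟩
               else p.2 ⟨(i : ℕ) - a, by have := i.isLt; omega⟩))
    ?_ ?_ ?_ ?_ ?_
  · -- membership forward
    intro c hc
    rw [mem_filter] at hc
    obtain ⟨-, ⟨hsat, hmin, hmax⟩, hjv⟩ := hc
    rw [Finset.mem_product, mem_filter, mem_filter]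
    have hval := satChain_iff_val.1 hsat
    refine ⟨⟨mem_univ _, ?_, ?_, ?_⟩, mem_univ _, ?_, ?_, ?_⟩
    · rw [satChain_iff_val]
      intro i h
      exact hval i (by omega)
    · simpa using hmin
    · simpa using hjv
    · rw [satChain_iff_val]
      intro i h
      exact hval (a + i) (by omega)
    · simpa using hjv
    · exact hmax
  · -- membership backward
    intro p hp
    rw [Finset.mem_product, mem_filter, mem_filter] at hp
    obtain ⟨⟨-, hdsat, hdmin, hdlast⟩, -, husat, hu0, hulast⟩ := hp
    have hdval := satChain_iff_val.1 hdsat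
    have huval := satChain_iff_val.1 husat
    have hglue_ge : ∀ (m : ℕ) (h1 : a ≤ m) (h2 : m < a + b + 1),
        (if h : m < a + 1 then p.1 ⟨m, h⟩ else p.2 ⟨m - a, by omega⟩)
          = p.2 ⟨m - a, by omega⟩ := by
      intro m h1 h2
      by_cases h : m < a + 1
      · rw [dif_pos h]
        have e5 : (⟨m, h⟩ : Fin (a + 1)) = Fin.last a := by
          ext
          simp only [Fin.val_last]
          omega
        have e6 : (⟨m - a, by omega⟩ : Fin (b + 1)) = 0 := by
          ext
          simp only [Fin.val_zero]
          omega
        rw [e5, e6, hdlast, hu0]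
      · rw [dif_neg h]
    rw [mem_filter]
    refine ⟨mem_univ _, ⟨?_, ?_, ?_⟩, ?_⟩
    · rw [satChain_iff_val]
      intro m hm
      show (if h : m < a + 1 then p.1 ⟨m, h⟩ else p.2 ⟨m - a, by omega⟩)
        ⋖ (if h : m + 1 < a + 1 then p.1 ⟨m + 1, h⟩ else p.2 ⟨m + 1 - a, by omega⟩)
      by_cases h1 : m + 1 < a + 1
      · rw [dif_pos (by omega : m < a + 1), dif_pos h1]
        exact hdval m (by omega)
      · rw [hglue_ge (m + 1) (by omega) (by omega)]
        by_cases h2 : m < a + 1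
        · -- m = a
          rw [dif_pos h2]
          have e5 : (⟨m, h2⟩ : Fin (a + 1)) = Fin.last a := by
            ext
            simp only [Fin.val_last]
            omega
          rw [e5, hdlast, ← hu0]
          have h3 := huval (m - a) (by omega)
          have e6 : (⟨m - a, by omega⟩ : Fin (b + 1)) = 0 := by
            ext
            simp only [Fin.val_zero]
            omega
          have e7 : (⟨m + 1 - a, by omega⟩ : Fin (b + 1))
              = (⟨m - a + 1, by omega⟩ : Fin (b + 1)) := by
            simp only [Fin.mk.injEq]
            omega
          rw [e7]
          rwa [e6] at h3
        · rw [dif_neg h2]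
          have h3 := huval (m - a) (by omega)
          have e7 : (⟨m + 1 - a, by omega⟩ : Fin (b + 1))
              = (⟨m - a + 1, by omega⟩ : Fin (b + 1)) := by
            simp only [Fin.mk.injEq]
            omega
          rw [e7]
          exact h3
    · show IsMin (if h : ((0 : Fin (a + b + 1)) : ℕ) < a + 1
        then p.1 ⟨((0 : Fin (a + b + 1)) : ℕ), h⟩
        else p.2 ⟨((0 : Fin (a + b + 1)) : ℕ) - a, by omega⟩)
      rw [dif_pos (by simp : ((0 : Fin (a + b + 1)) : ℕ) < a + 1)]
      simpa using hdmin
    · show IsMax (if h : ((Fin.last (a + b) : Fin (a + b + 1)) : ℕ) < a + 1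
        then p.1 ⟨((Fin.last (a + b) : Fin (a + b + 1)) : ℕ), h⟩
        else p.2 ⟨((Fin.last (a + b) : Fin (a + b + 1)) : ℕ) - a, by simp⟩)
      rw [hglue_ge ((Fin.last (a + b) : Fin (a + b + 1)) : ℕ) (by simp) (by simp)]
      have e10 : (⟨((Fin.last (a + b) : Fin (a + b + 1)) : ℕ) - a, by simp⟩ : Fin (b + 1))
          = Fin.last b := by
        ext
        simp
      rw [e10]
      exact hulast
    · show (if h : ((⟨a, by omega⟩ : Fin (a + b + 1)) : ℕ) < a + 1
        then p.1 ⟨((⟨a, by omega⟩ : Fin (a + b + 1)) : ℕ), h⟩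
        else p.2 ⟨((⟨a, by omega⟩ : Fin (a + b + 1)) : ℕ) - a, by simp⟩) = v
      rw [dif_pos (by simp : ((⟨a, by omega⟩ : Fin (a + b + 1)) : ℕ) < a + 1)]
      exact hdlast
  · -- left inverse
    intro c hc
    funext i
    show (if h : (i : ℕ) < a + 1 then c ⟨(i : ℕ), by have := i.isLt; omega⟩
      else c ⟨a + ((i : ℕ) - a), by have := i.isLt; omega⟩) = c i
    by_cases h : (i : ℕ) < a + 1
    · rw [dif_pos h]
    · rw [dif_neg h]
      exact congrArg c (by ext; simp; omega)
  · -- right inverse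
    intro p hp
    rw [Finset.mem_product, mem_filter, mem_filter] at hp
    obtain ⟨⟨-, hdsat, hdmin, hdlast⟩, -, husat, hu0, hulast⟩ := hp
    have hglue_ge : ∀ (m : ℕ) (h1 : a ≤ m) (h2 : m < a + b + 1),
        (if h : m < a + 1 then p.1 ⟨m, h⟩ else p.2 ⟨m - a, by omega⟩)
          = p.2 ⟨m - a, by omega⟩ := by
      intro m h1 h2
      by_cases h : m < a + 1
      · rw [dif_pos h]
        have e5 : (⟨m, h⟩ : Fin (a + 1)) = Fin.last a := by
          ext
          simp only [Fin.val_last]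
          omega
        have e6 : (⟨m - a, by omega⟩ : Fin (b + 1)) = 0 := by
          ext
          simp only [Fin.val_zero]
          omega
        rw [e5, e6, hdlast, hu0]
      · rw [dif_neg h]
    refine Prod.ext ?_ ?_
    · funext i
      show (if h : (i : ℕ) < a + 1 then p.1 ⟨(i : ℕ), h⟩
        else p.2 ⟨(i : ℕ) - a, by have := i.isLt; omega⟩) = p.1 i
      rw [dif_pos i.isLt]
    · funext i
      show (if h : a + (i : ℕ) < a + 1 then p.1 ⟨a + (i : ℕ), h⟩
        else p.2 ⟨a + (i : ℕ) - a, by have := i.isLt; omega⟩) = p.2 i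
      rw [hglue_ge (a + (i : ℕ)) (by omega) (by have := i.isLt; omega)]
      exact congrArg p.2 (by ext; simp)
  · -- products
    intro c hc
    rw [mem_filter] at hc
    obtain ⟨-, -, hjv⟩ := hc
    simp only [List.prod_ofFn, Function.comp]
    set h : ℕ → ℝ := fun m => if hm : m < a + b + 1 then g (c ⟨m, hm⟩) else 1 with hh
    have hc1 : ∀ i : Fin (a + b + 1), g (c i) = h i := by
      intro i
      rw [hh]
      simp only [i.isLt, dif_pos]
    have hc2 : ∀ i : Fin (a + 1), g (c ⟨(i : ℕ), by have := i.isLt; omega⟩) = h i := by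
      intro i
      rw [hh]
      have hi : (i : ℕ) < a + b + 1 := by have := i.isLt; omega
      simp only [hi, dif_pos]
    have hc3 : ∀ i : Fin (b + 1), g (c ⟨a + (i : ℕ), by have := i.isLt; omega⟩)
        = h (a + (i : ℕ)) := by
      intro i
      rw [hh]
      have hi : a + (i : ℕ) < a + b + 1 := by have := i.isLt; omega
      simp only [hi, dif_pos]
    have hgv : g v = h a := by
      rw [hh]
      have ha : a < a + b + 1 := by omega
      simp only [ha, dif_pos]
      rw [← hjv]
    have E1 : (∏ i : Fin (a + b + 1), g (c i)) = ∏ i ∈ range (a + b + 1), h i :=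
      (Fintype.prod_congr _ _ hc1).trans (Fin.prod_univ_eq_prod_range h _)
    have E2 : (∏ i : Fin (a + 1), g (c ⟨(i : ℕ), by have := i.isLt; omega⟩))
        = ∏ i ∈ range (a + 1), h i :=
      (Fintype.prod_congr _ _ hc2).trans (Fin.prod_univ_eq_prod_range h _)
    have E3 : (∏ i : Fin (b + 1), g (c ⟨a + (i : ℕ), by have := i.isLt; omega⟩))
        = ∏ i ∈ range (b + 1), h (a + i) :=
      (Fintype.prod_congr _ _ hc3).trans (Fin.prod_univ_eq_prod_range (fun m => h (a + m)) _)
    rw [E1, E2, E3, hgv]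
    exact range_prod_split h a b

end Part5

section Part6

variable {P : Type*} [Fintype P] [PartialOrder P]

theorem maxchain_split'' (g : P → ℝ) (v : P) (k a : ℕ) (ha : a < k + 1) :
    (∑ c ∈ univ.filter (fun c : Fin (k + 1) → P => MaxChain c ∧ c ⟨a, ha⟩ = v),
      (List.ofFn (g ∘ c)).prod) * g v = dnT g a v * upT g (k - a) v := by
  obtain ⟨b, hb⟩ : ∃ b, k = a + b := ⟨k - a, by omega⟩
  subst hb
  rw [show a + b - a = b from by omega]
  exact maxchain_split' g v a b

theorem maxchain_through (g : P → ℝ) (v : P) (k : ℕ) :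
    (∑ c ∈ univ.filter (fun c : Fin (k + 1) → P => MaxChain c ∧ ∃ j, c j = v),
      (List.ofFn (g ∘ c)).prod) * g v
    = ∑ a ∈ range (k + 1), dnT g a v * upT g (k - a) v := by
  have hset : univ.filter (fun c : Fin (k + 1) → P => MaxChain c ∧ ∃ j, c j = v)
      = Finset.biUnion univ (fun j : Fin (k + 1) =>
          univ.filter (fun c => MaxChain c ∧ c j = v)) := by
    ext c
    simp only [mem_filter, mem_biUnion, mem_univ, true_and]
    constructor
    · rintro ⟨hm, j, hj⟩
      exact ⟨j, hm, hj⟩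
    · rintro ⟨j, hm, hj⟩
      exact ⟨hm, j, hj⟩
  have hdisj : ((univ : Finset (Fin (k + 1))) : Set (Fin (k + 1))).PairwiseDisjoint
      (fun j => univ.filter (fun c : Fin (k + 1) → P => MaxChain c ∧ c j = v)) := by
    intro i _ j _ hij
    refine Finset.disjoint_left.2 ?_
    intro c hci hcj
    rw [mem_filter] at hci hcj
    exact hij (hci.2.1.1.strictMono.injective (hci.2.2.trans hcj.2.2.symm))
  rw [hset, sum_biUnion hdisj, sum_mul,
    sum_congr rfl (fun j (_ : j ∈ univ) => maxchain_split'' g v k j.1 j.2)]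
  exact Fin.sum_univ_eq_sum_range (fun a => dnT g a v * upT g (k - a) v) (k + 1)

theorem upsilon_factor (g : P → ℝ) (v : P) :
    Upsilon g v * g v = downDelta g v * deltaInvMap g v := by
  have h1 : Upsilon g v * g v
      = ∑ k ∈ range (Fintype.card P), ∑ a ∈ range (k + 1),
          dnT g a v * upT g (k - a) v := by
    rw [Upsilon, sum_mul]
    exact sum_congr rfl (fun k _ => maxchain_through g v k)
  rw [h1, sum_antidiag_eq (fun a => dnT g a v) (fun b => upT g b v) _
    (fun a b hab => dnT_mul_upT_eq_zero g hab)]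
  rfl

end Part6

section Part7

variable {P : Type*} [Fintype P] [PartialOrder P]

theorem deltaInvMap_congr_of_notle (f f' : P → ℝ) (v : P)
    (hff' : ∀ y, y ≠ v → f y = f' y) {x : P} (hx : ¬ x ≤ v) :
    deltaInvMap f x = deltaInvMap f' x := by
  refine sum_congr rfl fun k _ => sum_congr rfl fun c hc => ?_
  rw [mem_filter] at hc
  obtain ⟨-, hsat, h0, -⟩ := hc
  have : ∀ i, f (c i) = f' (c i) := by
    intro i
    refine hff' _ fun he => hx ?_
    rw [← he, ← h0]
    exact hsat.strictMono.monotone (Fin.zero_le i)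
  exact congrArg List.prod (congrArg List.ofFn (funext fun i => this i))

theorem upsilon_pos (g : P → ℝ) (hg : ∀ x, 0 < g x) (v : P) :
    0 < Upsilon g v := by
  have h := upsilon_factor g v
  have h2 : Upsilon g v = downDelta g v * deltaInvMap g v / g v := by
    rw [eq_div_iff (ne_of_gt (hg v))]
    exact h
  rw [h2]
  exact div_pos (mul_pos (downDelta_pos g hg v) (deltaInvMap_pos g hg v)) (hg v)

theorem atog_pos (C : ℝ) (hC : 0 < C) (v : P) (g : P → ℝ) (hg : ∀ x, 0 < g x) :
    ∀ x, 0 < atog C v g x := by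
  intro x
  unfold atog
  by_cases hx : x = v
  · rw [if_pos hx]
    exact div_pos hC (upsilon_pos g hg v)
  · rw [if_neg hx]
    exact hg x

end Part7

section Part8

theorem lext_split {Q : Type*} [PartialOrder Q] {A : Set Q} {le l1 l2 : List Q} {a : Q}
    (hle : IsLinearExtensionOn A le) (hsplit : le = l1 ++ a :: l2) :
    a ∈ A ∧ a ∉ l1 ∧ a ∉ l2 ∧
      (∀ y, y ∈ A → y < a → (y ∈ l1 ∧ y ∉ l2)) ∧
      (∀ y, y ∈ A → a < y → (y ∈ l2 ∧ y ∉ l1)) := by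
  obtain ⟨hnd, hmem, hord⟩ := hle
  subst hsplit
  have hndl : (l1 ++ a :: l2).Nodup := hnd
  rw [List.nodup_append] at hndl
  obtain ⟨hnd1, hnd2, hdisj⟩ := hndl
  have hanotl1 : a ∉ l1 := fun h => hdisj a h a List.mem_cons_self rfl
  have hanotl2 : a ∉ l2 := (List.nodup_cons.1 hnd2).1
  have hlen : l1.length < (l1 ++ a :: l2).length := by
    simp
  have hEa : (l1 ++ a :: l2)[l1.length]'hlen = a := by
    rw [List.getElem_append_right (le_refl l1.length)]
    simp
  refine ⟨(hmem a).1 (by simp), hanotl1, hanotl2, ?_, ?_⟩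
  · intro y hyA hya
    have hyle : y ∈ l1 ++ a :: l2 := (hmem y).2 hyA
    have hynotl2 : y ∉ l2 := by
      intro hyl2
      obtain ⟨j, hj, hjy⟩ := List.mem_iff_getElem.1 hyl2
      have hidx : l1.length + 1 + j < (l1 ++ a :: l2).length := by
        simp
        omega
      have hE : (l1 ++ a :: l2)[l1.length + 1 + j]'hidx = y := by
        rw [List.getElem_append_right (by omega)]
        have : l1.length + 1 + j - l1.length = j + 1 := by omega
        simp only [this]
        rw [List.getElem_cons_succ]
        exact hjy
      have := hord (l1.length + 1 + j) l1.length hidx hlen (by rw [hE, hEa]; exact hya)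
      omega
    have : y ∈ l1 ∨ y ∈ a :: l2 := List.mem_append.1 hyle
    rcases this with h | h
    · exact ⟨h, hynotl2⟩
    · rcases List.mem_cons.1 h with h2 | h2
      · rw [h2] at hya
        exact absurd hya (lt_irrefl a)
      · exact (hynotl2 h2).elim
  · intro y hyA hay
    have hyle : y ∈ l1 ++ a :: l2 := (hmem y).2 hyA
    have hynotl1 : y ∉ l1 := by
      intro hyl1
      obtain ⟨j, hj, hjy⟩ := List.mem_iff_getElem.1 hyl1
      have hidx : j < (l1 ++ a :: l2).length := by
        simp
        omega
      have hE : (l1 ++ a :: l2)[j]'hidx = y := by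
        rw [List.getElem_append_left hj]
        exact hjy
      have := hord l1.length j hlen hidx (by rw [hE, hEa]; exact hay)
      omega
    have : y ∈ l1 ∨ y ∈ a :: l2 := List.mem_append.1 hyle
    rcases this with h | h
    · exact (hynotl1 h).elim
    · rcases List.mem_cons.1 h with h2 | h2
      · rw [h2] at hay
        exact absurd hay (lt_irrefl a)
      · exact ⟨h2, hynotl1⟩

end Part8

section Part9

variable {P : Type*} [Fintype P] [PartialOrder P]

/-- `if` with a pinned (classical) decidability instance, to avoid instance mismatches. -/
noncomputable def pif (p : Prop) (a b : ℝ) : ℝ := @ite ℝ p (Classical.propDecidable p) a b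

theorem pif_pos {p : Prop} (h : p) (a b : ℝ) : pif p a b = a := if_pos h

theorem pif_neg {p : Prop} (h : ¬p) (a b : ℝ) : pif p a b = b := if_neg h

theorem stepA (C : ℝ) (hC : 0 < C) (g : P → ℝ) (hg : ∀ x, 0 < g x)
    (a : P) (S : P → Prop) (haS : ¬ S a)
    (hlow : ∀ y, y ⋖ a → S y) (hup : ∀ y, a ⋖ y → ¬ S y) :
    otog C a (fun x => pif (S x) (downDelta g x) (C / deltaInvMap g x))
      = fun x => pif (S x ∨ x = a) (downDelta g x) (C / deltaInvMap g x) := by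
  have hC' : C ≠ 0 := ne_of_gt hC
  funext x
  unfold otog
  by_cases hx : x = a
  · subst hx
    rw [if_pos rfl, pif_pos (Or.inr rfl)]
    have hga : g x ≠ 0 := ne_of_gt (hg x)
    have hFa : deltaInvMap g x ≠ 0 := ne_of_gt (deltaInvMap_pos g hg x)
    have hha : pif (S x) (downDelta g x) (C / deltaInvMap g x)
        = C / deltaInvMap g x := pif_neg haS _ _
    have h1 : lowSum (fun z => pif (S z) (downDelta g z) (C / deltaInvMap g z)) x
        = (if IsMin x then 1 else 0)
          + ∑ y ∈ univ.filter (fun y => y ⋖ x), downDelta g y := by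
      unfold lowSum
      congr 1
      refine sum_congr rfl fun y hy => ?_
      rw [mem_filter] at hy
      exact pif_pos (hlow y hy.2) _ _
    have h2 : upInvSum C (fun z => pif (S z) (downDelta g z) (C / deltaInvMap g z)) x
        = ((if IsMax x then 1 else 0)
          + ∑ y ∈ univ.filter (fun y => x ⋖ y), deltaInvMap g y) / C := by
      unfold upInvSum
      rw [add_div]
      congr 1
      · by_cases hm : IsMax x <;> simp [hm]
      · rw [sum_div]
        refine sum_congr rfl fun y hy => ?_
        rw [mem_filter] at hy
        beta_reduce
        rw [pif_neg (hup y hy.2), one_div_div]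
    have hM : ((if IsMax x then 1 else 0)
        + ∑ y ∈ univ.filter (fun y => x ⋖ y), deltaInvMap g y) ≠ 0 := by
      intro h0
      apply hFa
      rw [deltaInvMap_rec g x, h0, mul_zero]
    beta_reduce
    rw [hha, h1, h2, downDelta_rec g x, deltaInvMap_rec g x]
    field_simp
  · beta_reduce
    rw [if_neg hx]
    by_cases hSx : S x
    · rw [pif_pos hSx, pif_pos (Or.inl hSx)]
    · rw [pif_neg hSx, pif_neg (fun hc => hc.elim hSx hx)]

theorem stepC (C : ℝ) (hC : 0 < C) (v : P) (g : P → ℝ) (hg : ∀ x, 0 < g x)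
    (a : P) (hav : a ≠ v) (S : P → Prop) (haS : S a)
    (hlow : ∀ y, y ⋖ a → S y) (hup : ∀ y, a ⋖ y → ¬ S y) :
    otog C a (fun x => pif (S x) (downDelta g x) (C / deltaInvMap (atog C v g) x))
      = fun x => pif (S x ∧ x ≠ a) (downDelta g x)
          (C / deltaInvMap (atog C v g) x) := by
  have hC' : C ≠ 0 := ne_of_gt hC
  have hgt : ∀ z, 0 < atog C v g z := atog_pos C hC v g hg
  funext x
  unfold otog
  by_cases hx : x = a
  · subst hx
    rw [if_pos rfl, pif_neg (fun hcon => hcon.2 rfl)]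
    have hga : g x ≠ 0 := ne_of_gt (hg x)
    have hFa : deltaInvMap (atog C v g) x ≠ 0 := ne_of_gt (deltaInvMap_pos _ hgt x)
    have hGa : downDelta g x ≠ 0 := ne_of_gt (downDelta_pos g hg x)
    have hha : pif (S x) (downDelta g x) (C / deltaInvMap (atog C v g) x)
        = downDelta g x := pif_pos haS _ _
    have h1 : lowSum (fun z => pif (S z) (downDelta g z)
          (C / deltaInvMap (atog C v g) z)) x
        = (if IsMin x then 1 else 0)
          + ∑ y ∈ univ.filter (fun y => y ⋖ x), downDelta g y := by
      unfold lowSum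
      congr 1
      refine sum_congr rfl fun y hy => ?_
      rw [mem_filter] at hy
      exact pif_pos (hlow y hy.2) _ _
    have h2 : upInvSum C (fun z => pif (S z) (downDelta g z)
          (C / deltaInvMap (atog C v g) z)) x
        = ((if IsMax x then 1 else 0)
          + ∑ y ∈ univ.filter (fun y => x ⋖ y), deltaInvMap (atog C v g) y) / C := by
      unfold upInvSum
      rw [add_div]
      congr 1
      · by_cases hm : IsMax x <;> simp [hm]
      · rw [sum_div]
        refine sum_congr rfl fun y hy => ?_
        rw [mem_filter] at hy
        beta_reduce
        rw [pif_neg (hup y hy.2), one_div_div]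
    have hM : ((if IsMax x then 1 else 0)
        + ∑ y ∈ univ.filter (fun y => x ⋖ y), deltaInvMap (atog C v g) y) ≠ 0 := by
      intro h0
      apply hFa
      rw [deltaInvMap_rec (atog C v g) x, h0, mul_zero]
    have hL : ((if IsMin x then 1 else 0)
        + ∑ y ∈ univ.filter (fun y => y ⋖ x), downDelta g y) ≠ 0 := by
      intro h0
      apply hGa
      rw [downDelta_rec g x, h0, mul_zero]
    have hrec : deltaInvMap (atog C v g) x
        = g x * ((if IsMax x then 1 else 0)
          + ∑ y ∈ univ.filter (fun y => x ⋖ y), deltaInvMap (atog C v g) y) := by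
      rw [deltaInvMap_rec (atog C v g) x]
      congr 1
      unfold atog
      rw [if_neg hav]
    beta_reduce
    rw [hha, h1, h2, downDelta_rec g x, hrec]
    field_simp
  · beta_reduce
    rw [if_neg hx]
    by_cases hSx : S x
    · rw [pif_pos hSx, pif_pos ⟨hSx, hx⟩]
    · rw [pif_neg hSx, pif_neg (fun hc => hSx hc.1)]

theorem stepB (C : ℝ) (hC : 0 < C) (v : P) (g : P → ℝ) (hg : ∀ x, 0 < g x) :
    otog C v (fun x => pif (x < v) (downDelta g x) (C / deltaInvMap g x))
      = fun x => pif (x < v) (downDelta g x)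
          (C / deltaInvMap (atog C v g) x) := by
  have hC' : C ≠ 0 := ne_of_gt hC
  have hgt : ∀ z, 0 < atog C v g z := atog_pos C hC v g hg
  have hgv : g v ≠ 0 := ne_of_gt (hg v)
  have hGv : downDelta g v ≠ 0 := ne_of_gt (downDelta_pos g hg v)
  have hFv : deltaInvMap g v ≠ 0 := ne_of_gt (deltaInvMap_pos g hg v)
  have hUps : Upsilon g v ≠ 0 := ne_of_gt (upsilon_pos g hg v)
  have hcongr : ∀ x : P, ¬ x ≤ v → deltaInvMap (atog C v g) x = deltaInvMap g x := by
    intro x hx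
    refine deltaInvMap_congr_of_notle _ _ v (fun y hy => ?_) hx
    unfold atog
    rw [if_neg hy]
  have hMv : ((if IsMax v then 1 else 0)
      + ∑ y ∈ univ.filter (fun y => v ⋖ y), deltaInvMap g y) ≠ 0 := by
    intro h0
    apply hFv
    rw [deltaInvMap_rec g v, h0, mul_zero]
  have hupfac : Upsilon g v = downDelta g v * ((if IsMax v then 1 else 0)
      + ∑ y ∈ univ.filter (fun y => v ⋖ y), deltaInvMap g y) := by
    apply mul_right_cancel₀ hgv
    rw [upsilon_factor g v, deltaInvMap_rec g v]
    ring
  have hFt : deltaInvMap (atog C v g) v = C / downDelta g v := by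
    rw [deltaInvMap_rec (atog C v g) v]
    have hsum : ∑ y ∈ univ.filter (fun y => v ⋖ y), deltaInvMap (atog C v g) y
        = ∑ y ∈ univ.filter (fun y => v ⋖ y), deltaInvMap g y := by
      refine sum_congr rfl fun y hy => ?_
      rw [mem_filter] at hy
      exact hcongr y hy.2.lt.not_ge
    rw [hsum, show atog C v g v = C / Upsilon g v from by unfold atog; rw [if_pos rfl],
      hupfac]
    field_simp
  funext x
  unfold otog
  by_cases hx : x = v
  · subst hx
    rw [if_pos rfl, pif_neg (lt_irrefl x), hFt]
    have h1 : lowSum (fun z => pif (z < x) (downDelta g z) (C / deltaInvMap g z)) x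
        = (if IsMin x then 1 else 0)
          + ∑ y ∈ univ.filter (fun y => y ⋖ x), downDelta g y := by
      unfold lowSum
      congr 1
      refine sum_congr rfl fun y hy => ?_
      rw [mem_filter] at hy
      exact pif_pos hy.2.lt _ _
    have h2 : upInvSum C (fun z => pif (z < x) (downDelta g z) (C / deltaInvMap g z)) x
        = ((if IsMax x then 1 else 0)
          + ∑ y ∈ univ.filter (fun y => x ⋖ y), deltaInvMap g y) / C := by
      unfold upInvSum
      rw [add_div]
      congr 1
      · by_cases hm : IsMax x <;> simp [hm]
      · rw [sum_div]
        refine sum_congr rfl fun y hy => ?_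
        rw [mem_filter] at hy
        beta_reduce
        rw [pif_neg (asymm hy.2.lt), one_div_div]
    have hL : ((if IsMin x then 1 else 0)
        + ∑ y ∈ univ.filter (fun y => y ⋖ x), downDelta g y) ≠ 0 := by
      intro h0
      apply hGv
      rw [downDelta_rec g x, h0, mul_zero]
    beta_reduce
    rw [pif_neg (lt_irrefl x), h1, h2, downDelta_rec g x, deltaInvMap_rec g x]
    field_simp
  · beta_reduce
    rw [if_neg hx]
    by_cases hlt : x < v
    · rw [pif_pos hlt, pif_pos hlt]
    · rw [pif_neg hlt, pif_neg hlt,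
        hcongr x (fun hc => hc.lt_or_eq.elim hlt hx)]

theorem claimA (C : ℝ) (hC : 0 < C) (v : P) (g : P → ℝ) (hg : ∀ x, 0 < g x)
    (le : List P) (hle : IsLinearExtensionOn {x : P | x < v} le) :
    ∀ l1 l2, le = l1 ++ l2 →
      applyOTogs C l1 (fun x => C / deltaInvMap g x)
        = fun x => pif (x ∈ l1) (downDelta g x) (C / deltaInvMap g x) := by
  intro l1
  induction l1 using List.reverseRecOn with
  | nil =>
    intro l2 h
    funext x
    rw [pif_neg (List.not_mem_nil : x ∉ [])]
    rfl
  | append_singleton l1 a IH =>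
    intro l2 hsplit
    have hsplit' : le = l1 ++ a :: l2 := by
      rw [hsplit]
      simp
    obtain ⟨haA, hal1, hal2, hlowf, hupf⟩ := lext_split hle hsplit'
    have hav : a < v := haA
    have hfold : applyOTogs C (l1 ++ [a]) (fun x => C / deltaInvMap g x)
        = otog C a (applyOTogs C l1 (fun x => C / deltaInvMap g x)) := by
      unfold applyOTogs
      rw [List.foldl_append]
      rfl
    rw [hfold, IH (a :: l2) hsplit']
    have hlow : ∀ y, y ⋖ a → y ∈ l1 := fun y hy =>
      (hlowf y (hy.lt.trans hav) hy.lt).1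
    have hup : ∀ y, a ⋖ y → y ∉ l1 := by
      intro y hy hymem
      by_cases hyv : y < v
      · exact (hupf y hyv hy.lt).2 hymem
      · exact hyv ((hle.2.1 y).1 (hsplit' ▸ List.mem_append.2 (Or.inl hymem)))
    refine (stepA C hC g hg a (fun x => x ∈ l1) hal1 hlow hup).trans ?_
    funext x
    have hiff : (x ∈ l1 ∨ x = a) ↔ x ∈ l1 ++ [a] := by simp
    by_cases h : x ∈ l1 ∨ x = a
    · rw [pif_pos h, pif_pos (hiff.1 h)]
    · rw [pif_neg h, pif_neg (fun hc => h (hiff.2 hc))]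

theorem claimC (C : ℝ) (hC : 0 < C) (v : P) (g : P → ℝ) (hg : ∀ x, 0 < g x)
    (le : List P) (hle : IsLinearExtensionOn {x : P | x < v} le) :
    ∀ l2 l1, le = l1 ++ l2 →
      l2.foldr (fun w h => otog C w h)
        (fun x => pif (x ∈ le) (downDelta g x) (C / deltaInvMap (atog C v g) x))
      = fun x => pif (x ∈ l1) (downDelta g x) (C / deltaInvMap (atog C v g) x) := by
  intro l2
  induction l2 with
  | nil =>
    intro l1 h
    rw [List.foldr_nil]
    rw [List.append_nil] at h
    rw [h]
  | cons a t IH =>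
    intro l1 hsplit
    rw [List.foldr_cons]
    have hsplit2 : le = (l1 ++ [a]) ++ t := by
      rw [hsplit]
      simp
    rw [IH (l1 ++ [a]) hsplit2]
    obtain ⟨haA, hal1, hat, hlowf, hupf⟩ := lext_split hle hsplit
    have hav : a < v := haA
    have hlow : ∀ y, y ⋖ a → y ∈ l1 ++ [a] := fun y hy =>
      List.mem_append.2 (Or.inl (hlowf y (hy.lt.trans hav) hy.lt).1)
    have hup : ∀ y, a ⋖ y → y ∉ l1 ++ [a] := by
      intro y hy hymem
      have hya : y ≠ a := ne_of_gt hy.lt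
      have hyl1 : y ∈ l1 := by
        rcases List.mem_append.1 hymem with h | h
        · exact h
        · exact absurd (List.mem_singleton.1 h) hya
      by_cases hyv : y < v
      · exact (hupf y hyv hy.lt).2 hyl1
      · exact hyv ((hle.2.1 y).1 (hsplit ▸ List.mem_append.2 (Or.inl hyl1)))
    refine (stepC C hC v g hg a (ne_of_lt hav) (fun x => x ∈ l1 ++ [a])
      (by simp) hlow hup).trans ?_
    funext x
    have hiff : (x ∈ l1 ++ [a] ∧ x ≠ a) ↔ x ∈ l1 := by
      constructor
      · rintro ⟨h1, h2⟩
        rcases List.mem_append.1 h1 with h | h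
        · exact h
        · exact absurd (List.mem_singleton.1 h) h2
      · intro h
        exact ⟨List.mem_append.2 (Or.inl h), fun hc => hal1 (hc ▸ h)⟩
    by_cases h : x ∈ l1 ++ [a] ∧ x ≠ a
    · rw [pif_pos h, pif_pos (hiff.1 h)]
    · rw [pif_neg h, pif_neg (fun hc => h (hiff.2 hc))]

end Part9

/-- Let `v ∈ P` and let `le = (x₁,…,x_k)` be a linear extension of the
subposet `{x ∈ P : x < v}`.  With `η_v = T_{x₁} ∘ T_{x₂} ∘ ⋯ ∘ T_{x_k}` (so `η_v⁻¹ =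
T_{x_k} ∘ ⋯ ∘ T_{x₁}`, each `T` being an involution on positive labelings) and
`τ_v* = η_v ∘ T_v ∘ η_v⁻¹`, we have `Θ ∘ Δ⁻¹ ∘ τ_v = τ_v* ∘ Θ ∘ Δ⁻¹` on positive
labelings.  Below, `η_v⁻¹` is realized by `applyOTogs C le` (apply `T_{x₁}` first) and
`η_v` by `le.foldr` (apply `T_{x_k}` first). -/
theorem theta_deltaInv_atog_eq_tauStar (C : ℝ) (hC : 0 < C) (v : P)
    (le : List P) (hle : IsLinearExtensionOn {x : P | x < v} le)
    (g : P → ℝ) (hg : ∀ x, 0 < g x) :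
    thetaMap C (deltaInvMap (atog C v g))
      = le.foldr (fun w h => otog C w h)
          (otog C v (applyOTogs C le (thetaMap C (deltaInvMap g)))) := by
  have hA := claimA C hC v g hg le hle le [] (by simp)
  have hmemle : ∀ x : P, x ∈ le ↔ x < v := fun x => hle.2.1 x
  have hθ : thetaMap C (deltaInvMap g) = fun x => C / deltaInvMap g x := rfl
  have hA' : applyOTogs C le (thetaMap C (deltaInvMap g))
      = fun x => pif (x < v) (downDelta g x) (C / deltaInvMap g x) := by
    rw [hθ, hA]
    funext x
    by_cases h : x < v
    · rw [pif_pos ((hmemle x).2 h), pif_pos h]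
    · rw [pif_neg (fun hc => h ((hmemle x).1 hc)), pif_neg h]
  have hB := stepB C hC v g hg
  have hf2 : (fun x => pif (x < v) (downDelta g x) (C / deltaInvMap (atog C v g) x))
      = fun x => pif (x ∈ le) (downDelta g x) (C / deltaInvMap (atog C v g) x) := by
    funext x
    by_cases h : x < v
    · rw [pif_pos h, pif_pos ((hmemle x).2 h)]
    · rw [pif_neg h, pif_neg (fun hc => h ((hmemle x).1 hc))]
  have hCfull := claimC C hC v g hg le hle le [] rfl
  rw [hA', hB, hf2, hCfull]
  funext x
  rw [pif_neg (List.not_mem_nil : x ∉ [])]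
  rfl
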